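/- For every prime number k, the smallest positive integer n with r₂(n) = 4k is n = 5^{k−1}; that is, n_k = 5^{k−1} whenever k is prime. -/

import Mathlib

open Finset

/-- `r₂(d)`: the number of ordered pairs `(a,b) ∈ ℤ²` with `a² + b² = d`. -/
noncomputable def r2 (d : ℕ) : ℕ :=
  ((Finset.Icc (-(d : ℤ)) (d : ℤ) ×ˢ Finset.Icc (-(d : ℤ)) (d : ℤ)).filter
    (fun p => p.1 ^ 2 + p.2 ^ 2 = (d : ℤ))).card

/-- `n_k`: the smallest positive integer `n` with `r₂(n) = 4k`. -/
noncomputable def nk (k : ℕ) : ℕ := sInf {n : ℕ | 0 < n ∧ r2 n = 4 * k}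

/-- The `i`-th prime congruent to 1 mod 4 (0-indexed, increasing order). -/
noncomputable def nthP1 (i : ℕ) : ℕ := Nat.nth (fun p => p.Prime ∧ p % 4 = 1) i

open Zsqrtd GaussianInt


noncomputable def gset (n : ℕ) : Finset GaussianInt :=
  ((Finset.Icc (-(n : ℤ)) (n : ℤ) ×ˢ Finset.Icc (-(n : ℤ)) (n : ℤ)).filter
    (fun p => p.1 ^ 2 + p.2 ^ 2 = (n : ℤ))).image (fun p => ⟨p.1, p.2⟩)

lemma mem_gset {n : ℕ} {z : GaussianInt} : z ∈ gset n ↔ z.norm = (n : ℤ) := by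
  simp only [gset, Finset.mem_image, Finset.mem_filter, Finset.mem_product, Finset.mem_Icc]
  constructor
  · rintro ⟨⟨a, b⟩, ⟨_, h⟩, rfl⟩
    simp [Zsqrtd.norm_def]; ring_nf; ring_nf at h; linarith [h]
  · rintro h
    refine ⟨⟨z.re, z.im⟩, ⟨⟨⟨?_, ?_⟩, ?_, ?_⟩, ?_⟩, ?_⟩
    · nlinarith [Zsqrtd.norm_def z ▸ h, sq_nonneg (z.re + 1), sq_nonneg z.im]
    · nlinarith [Zsqrtd.norm_def z ▸ h, sq_nonneg (z.re - 1), sq_nonneg z.im]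
    · nlinarith [Zsqrtd.norm_def z ▸ h, sq_nonneg (z.im + 1), sq_nonneg z.re]
    · nlinarith [Zsqrtd.norm_def z ▸ h, sq_nonneg (z.im - 1), sq_nonneg z.re]
    · have := Zsqrtd.norm_def z ▸ h; nlinarith []
    · rfl

lemma r2_eq_card (n : ℕ) : r2 n = (gset n).card := by
  rw [gset, Finset.card_image_of_injective _ (fun p q h => by
    cases p; cases q; simpa [Zsqrtd.ext_iff] using h)]
  rfl

lemma prime_of_norm_prime {z : GaussianInt} {p : ℕ} (hp : p.Prime) (h : z.norm = (p : ℤ)) :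
    Prime z := by
  rw [← UniqueFactorizationMonoid.irreducible_iff_prime]
  constructor
  · intro hu
    rw [← Zsqrtd.norm_eq_one_iff, h] at hu
    simp at hu
    exact hp.ne_one hu
  · intro a b hab
    have h2 : a.norm.natAbs * b.norm.natAbs = p := by
      rw [← Int.natAbs_mul, ← Zsqrtd.norm_mul, ← hab, h]; simp
    rcases (Nat.Prime.eq_one_or_self_of_dvd hp _ ⟨_, h2.symm⟩ : _) with h3 | h3
    · left; rw [← Zsqrtd.norm_eq_one_iff]; exact h3
    · right; rw [← Zsqrtd.norm_eq_one_iff]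
      have hb := h2
      rw [h3] at hb
      have : b.norm.natAbs = 1 := by
        have hp1 := hp.pos
        nlinarith [hb]
      exact this

lemma norm_one_cases {z : GaussianInt} (h : z.norm = 1) :
    z = 1 ∨ z = -1 ∨ z = ⟨0,1⟩ ∨ z = ⟨0,-1⟩ := by
  rw [Zsqrtd.norm_def] at h
  obtain ⟨a, b⟩ := z
  simp only at h
  have h1 : -1 ≤ a ∧ a ≤ 1 := by constructor <;> nlinarith [sq_nonneg a, sq_nonneg b, sq_nonneg (a+1), sq_nonneg (a-1)]
  have h2 : -1 ≤ b ∧ b ≤ 1 := by constructor <;> nlinarith [sq_nonneg a, sq_nonneg b, sq_nonneg (b+1), sq_nonneg (b-1)]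
  obtain ⟨h1a, h1b⟩ := h1
  obtain ⟨h2a, h2b⟩ := h2
  simp only [Zsqrtd.ext_iff]
  have : (1 : GaussianInt).re = 1 := rfl
  interval_cases a <;> interval_cases b <;> simp_all <;> omega

lemma dvd_of_two_dvd_norm {z : GaussianInt} {t : ℕ} (h : z.norm = (2 * t : ℕ)) :
    (⟨1,1⟩ : GaussianInt) ∣ z := by
  have hpr : Prime (⟨1,1⟩ : GaussianInt) := prime_of_norm_prime Nat.prime_two (by decide)
  have hdvd : (⟨1,1⟩ : GaussianInt) ∣ z * star z := by
    rw [← Zsqrtd.norm_eq_mul_conj, h]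
    push_cast
    exact Dvd.dvd.mul_right ⟨⟨1,-1⟩, by decide⟩ _
  rcases hpr.dvd_or_dvd hdvd with h1 | h1
  · exact h1
  · obtain ⟨c, hc⟩ := h1
    have h2 : (star ⟨1,1⟩ : GaussianInt) ∣ z := by
      refine ⟨star c, ?_⟩
      have := congrArg star hc
      rw [star_star, star_mul'] at this
      exact this
    have : (⟨1,1⟩ : GaussianInt) ∣ (star ⟨1,1⟩ : GaussianInt) := ⟨⟨0,-1⟩, by decide⟩
    exact this.trans h2

lemma card_gset_two_mul (t : ℕ) : (gset (2 * t)).card = (gset t).card := by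
  have himg : gset (2 * t) = (gset t).image (fun w => (⟨1,1⟩ : GaussianInt) * w) := by
    ext z
    simp only [Finset.mem_image, mem_gset]
    constructor
    · intro hz
      obtain ⟨w, rfl⟩ := dvd_of_two_dvd_norm (by exact_mod_cast hz)
      refine ⟨w, ?_, rfl⟩
      have h2 : Zsqrtd.norm (⟨1,1⟩ : GaussianInt) * w.norm = 2 * t := by
        rw [← Zsqrtd.norm_mul]; exact_mod_cast hz
      have hn : Zsqrtd.norm (⟨1,1⟩ : GaussianInt) = 2 := by decide
      rw [hn] at h2
      omega
    · rintro ⟨w, hw, rfl⟩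
      rw [Zsqrtd.norm_mul, hw]
      push_cast
      have : Zsqrtd.norm (⟨1,1⟩ : GaussianInt) = 2 := by decide
      rw [this]
  rw [himg, Finset.card_image_of_injective]
  exact mul_right_injective₀ (by decide)

lemma q_dvd_self_of_dvd_norm {q : ℕ} (hq : q.Prime) (h3 : q % 4 = 3) {z : GaussianInt}
    {m : ℕ} (hd : q ∣ m) (h : z.norm = (m : ℕ)) : (q : GaussianInt) ∣ z := by
  haveI : Fact q.Prime := ⟨hq⟩
  have hpr : Prime (q : GaussianInt) :=
    (GaussianInt.prime_iff_mod_four_eq_three_of_nat_prime q).mpr h3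
  have hdvd : (q : GaussianInt) ∣ z * star z := by
    rw [← Zsqrtd.norm_eq_mul_conj, h]
    obtain ⟨c, rfl⟩ := hd
    push_cast
    exact Dvd.intro _ rfl
  rcases hpr.dvd_or_dvd hdvd with h1 | h1
  · exact h1
  · obtain ⟨c, hc⟩ := h1
    refine ⟨star c, ?_⟩
    have := congrArg star hc
    rw [star_star, star_mul'] at this
    simpa using this

lemma card_gset_qsq_mul {q : ℕ} (hq : q.Prime) (h3 : q % 4 = 3) (t : ℕ) :
    (gset (q ^ 2 * t)).card = (gset t).card := by
  have himg : gset (q ^ 2 * t) = (gset t).image (fun w => (q : GaussianInt) * w) := by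
    ext z
    simp only [Finset.mem_image, mem_gset]
    constructor
    · intro hz
      obtain ⟨w, rfl⟩ := q_dvd_self_of_dvd_norm hq h3 (dvd_mul_of_dvd_left (dvd_pow_self q two_ne_zero) t) hz
      refine ⟨w, ?_, rfl⟩
      rw [Zsqrtd.norm_mul, Zsqrtd.norm_natCast] at hz
      have hq0 : (q : ℤ) ≠ 0 := by exact_mod_cast hq.ne_zero
      push_cast at hz ⊢
      have : (q:ℤ) * q * w.norm = q * q * t := by ring_nf; ring_nf at hz; linarith
      exact mul_left_cancel₀ (mul_ne_zero hq0 hq0) this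
    · rintro ⟨w, hw, rfl⟩
      rw [Zsqrtd.norm_mul, Zsqrtd.norm_natCast, hw]
      push_cast
      ring
  rw [himg, Finset.card_image_of_injective]
  refine mul_right_injective₀ ?_
  simpa using hq.ne_zero

lemma gset_q_not_sq {q : ℕ} (hq : q.Prime) (h3 : q % 4 = 3) {t : ℕ} (ht : ¬ q ∣ t) :
    gset (q * t) = ∅ := by
  rw [Finset.eq_empty_iff_forall_notMem]
  intro z hz
  rw [mem_gset] at hz
  obtain ⟨w, rfl⟩ := q_dvd_self_of_dvd_norm hq h3 (Dvd.intro _ rfl) hz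
  rw [Zsqrtd.norm_mul, Zsqrtd.norm_natCast] at hz
  apply ht
  have : (q : ℤ) ∣ (t : ℤ) := by
    refine ⟨w.norm, ?_⟩
    have hq0 : (q : ℤ) ≠ 0 := by exact_mod_cast hq.ne_zero
    apply mul_left_cancel₀ hq0
    push_cast at hz ⊢
    linarith
  exact_mod_cast this

section P1
variable {p : ℕ} (hp : p.Prime) (h1 : p % 4 = 1)

lemma not_assoc (hp : p.Prime) (h1 : p % 4 = 1) {x y : ℕ} (hxy : (x:ℤ)^2 + (y:ℤ)^2 = p) :
    ¬ (⟨(x:ℤ),(y:ℤ)⟩ : GaussianInt) ∣ star ⟨(x:ℤ),(y:ℤ)⟩ := by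
  set π : GaussianInt := ⟨(x:ℤ),(y:ℤ)⟩ with hπ
  have hnorm : π.norm = (p : ℤ) := by rw [Zsqrtd.norm_def]; push_cast; ring_nf; ring_nf at hxy; linarith
  rintro ⟨c, hc⟩
  have hcn : c.norm = 1 := by
    have h2 : (star π).norm = π.norm * c.norm := by rw [hc, Zsqrtd.norm_mul]
    rw [Zsqrtd.norm_conj, hnorm] at h2
    have hp0 : (p : ℤ) ≠ 0 := by exact_mod_cast hp.ne_zero
    have h3 : (p:ℤ) * 1 = (p:ℤ) * c.norm := by linarith
    exact (mul_left_cancel₀ hp0 h3).symm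
  have h2 := hp.two_le
  rcases norm_one_cases hcn with rfl | rfl | rfl | rfl <;>
    rw [Zsqrtd.ext_iff] at hc <;>
    simp [hπ, Zsqrtd.re_mul, Zsqrtd.im_mul, Zsqrtd.re_star, Zsqrtd.im_star] at hc
  · have hy : y = 0 := by omega
    subst hy
    have hx : x * x = p := by push_cast at hxy; nlinarith [hxy]
    rcases hp.eq_one_or_self_of_dvd x ⟨x, hx.symm⟩ with h3 | h3 <;> nlinarith
  · have hx : x = 0 := by omega
    subst hx
    have hy : y * y = p := by push_cast at hxy; nlinarith [hxy]
    rcases hp.eq_one_or_self_of_dvd y ⟨y, hy.symm⟩ with h3 | h3 <;> nlinarith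
  · have hx : x = 0 ∧ y = 0 := by omega
    obtain ⟨rfl, rfl⟩ := hx
    push_cast at hxy
    nlinarith
  · obtain ⟨rfl, -⟩ := hc
    have hx : p = 2 * (x * x) := by push_cast at hxy; nlinarith [hxy]
    omega

end P1

lemma not_dvd_of_norm {p : ℕ} {π w : GaussianInt} {t : ℕ} (hnorm : π.norm = (p:ℤ))
    (ht : ¬ p ∣ t) (hw : w.norm = (t:ℤ)) : ¬ π ∣ w := by
  rintro ⟨c, rfl⟩
  apply ht
  rw [Zsqrtd.norm_mul, hnorm] at hw
  have : (p:ℤ) ∣ (t:ℤ) := ⟨c.norm, hw.symm⟩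
  exact_mod_cast this

lemma rep_exists {p : ℕ} {π : GaussianInt} (hπ : Prime π) (hnorm : π.norm = (p:ℤ))
    (hp' : p.Prime) :
    ∀ b t (z : GaussianInt), ¬ p ∣ t → z.norm = ((p ^ b * t : ℕ) : ℤ) →
      ∃ c w, c ≤ b ∧ z = π ^ c * (star π) ^ (b - c) * w ∧ w.norm = (t : ℤ) := by
  intro b
  induction b with
  | zero => intro t z ht hz; exact ⟨0, z, le_refl 0, by simp, by simpa using hz⟩
  | succ b ih =>
    intro t z ht hz
    have hp0 : (p : ℤ) ≠ 0 := by exact_mod_cast hp'.ne_zero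
    have hdvd : π ∣ z * star z := by
      rw [← Zsqrtd.norm_eq_mul_conj, hz]
      have h2 : π ∣ ((p : ℤ) : GaussianInt) := by
        rw [← hnorm, Zsqrtd.norm_eq_mul_conj]
        exact Dvd.intro _ rfl
      refine h2.trans ?_
      push_cast
      exact dvd_mul_of_dvd_left (dvd_pow_self _ (Nat.succ_ne_zero b)) _
    have key : ∀ u : GaussianInt, z = π * u ∨ z = star π * u → u.norm = ((p ^ b * t : ℕ) : ℤ) := by
      intro u hu
      have h3 : z.norm = (p : ℤ) * u.norm := by
        rcases hu with rfl | rfl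
        · rw [Zsqrtd.norm_mul, hnorm]
        · rw [Zsqrtd.norm_mul, Zsqrtd.norm_conj, hnorm]
      rw [hz] at h3
      apply mul_left_cancel₀ hp0
      rw [← h3]
      push_cast
      ring
    rcases hπ.dvd_or_dvd hdvd with hd | hd
    · obtain ⟨u, hu⟩ := hd
      obtain ⟨c, w, hc, hw, hwn⟩ := ih t u ht (key u (Or.inl hu))
      refine ⟨c + 1, w, by omega, ?_, hwn⟩
      have he : b + 1 - (c + 1) = b - c := by omega
      rw [he, hu, hw, pow_succ]
      ring
    · have hd' : star π ∣ z := by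
        obtain ⟨c, hc⟩ := hd
        refine ⟨star c, ?_⟩
        have := congrArg star hc
        rw [star_star, star_mul'] at this
        simpa using this
      obtain ⟨u, hu⟩ := hd'
      obtain ⟨c, w, hc, hw, hwn⟩ := ih t u ht (key u (Or.inr hu))
      refine ⟨c, w, by omega, ?_, hwn⟩
      have he : b + 1 - c = (b - c) + 1 := by omega
      rw [he, hu, hw, pow_succ]
      ring

lemma rep_le_aux {π : GaussianInt} (hπ : Prime π) (hnd : ¬ π ∣ star π)
    {c c' e e' : ℕ} {w w' : GaussianInt} (hw : ¬ π ∣ w)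
    (hcc : c ≤ c')
    (heq : π ^ c * (star π) ^ e * w = π ^ c' * (star π) ^ e' * w') : c = c' := by
  by_contra hne
  have hlt : c < c' := lt_of_le_of_ne hcc hne
  have h0 : π ^ c ≠ 0 := pow_ne_zero _ hπ.ne_zero
  have hsplit : π ^ c' = π ^ c * π ^ (c' - c) := by
    rw [← pow_add]; congr 1; omega
  have heq2 : (star π) ^ e * w = π ^ (c' - c) * ((star π) ^ e' * w') := by
    apply mul_left_cancel₀ h0
    rw [hsplit] at heq
    linear_combination heq
  have hd : π ∣ (star π) ^ e * w := by
    rw [heq2]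
    exact Dvd.dvd.mul_right (dvd_pow_self π (by omega)) _
  rcases hπ.dvd_or_dvd hd with h | h
  · exact hnd (hπ.dvd_of_dvd_pow h)
  · exact hw h

lemma card_gset_p1 {p : ℕ} (hp : p.Prime) (h1 : p % 4 = 1) {t : ℕ} (ht : ¬ p ∣ t) (a : ℕ) :
    (gset (p ^ a * t)).card = (a + 1) * (gset t).card := by
  haveI : Fact p.Prime := ⟨hp⟩
  obtain ⟨x, y, hxy⟩ := Nat.Prime.sq_add_sq (p := p) (by omega)
  have hxy' : ((x:ℤ))^2 + ((y:ℤ))^2 = (p:ℤ) := by exact_mod_cast hxy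
  set π : GaussianInt := ⟨(x:ℤ),(y:ℤ)⟩ with hπdef
  have hnorm : π.norm = (p : ℤ) := by
    rw [Zsqrtd.norm_def]; push_cast; ring_nf; ring_nf at hxy'; linarith
  have hπ : Prime π := prime_of_norm_prime hp hnorm
  have hnd : ¬ π ∣ star π := not_assoc hp h1 hxy'
  have hnorm' : (star π).norm = (p : ℤ) := by rw [Zsqrtd.norm_conj, hnorm]
  have himg : gset (p ^ a * t) =
      ((Finset.range (a+1)) ×ˢ gset t).image
        (fun cw => π ^ cw.1 * (star π) ^ (a - cw.1) * cw.2) := by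
    ext z
    simp only [Finset.mem_image, Finset.mem_product, Finset.mem_range, mem_gset]
    constructor
    · intro hz
      obtain ⟨c, w, hc, hw, hwn⟩ := rep_exists hπ hnorm hp a t z ht hz
      exact ⟨(c, w), ⟨by omega, hwn⟩, hw.symm⟩
    · rintro ⟨⟨c, w⟩, ⟨hc, hw⟩, rfl⟩
      simp only
      have hw' : Zsqrtd.norm w = (t:ℤ) := hw
      have hpow : ∀ (u : GaussianInt) (m : ℕ), Zsqrtd.norm (u ^ m) = (Zsqrtd.norm u) ^ m :=
        fun u m => map_pow Zsqrtd.normMonoidHom u m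
      rw [Zsqrtd.norm_mul, Zsqrtd.norm_mul, hpow, hpow, hnorm, hnorm', hw']
      push_cast
      rw [← pow_add]
      congr 2
      omega
  rw [himg, Finset.card_image_of_injOn, Finset.card_product, Finset.card_range]
  rintro ⟨c, w⟩ hcw ⟨c', w'⟩ hcw' heq
  simp only [Finset.mem_product, Finset.mem_range, mem_gset, Finset.mem_coe] at hcw hcw'
  have hwd : ¬ π ∣ w := not_dvd_of_norm hnorm ht hcw.2
  have hwd' : ¬ π ∣ w' := not_dvd_of_norm hnorm ht hcw'.2
  simp only at heq
  have hcc : c = c' := by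
    rcases le_total c c' with h | h
    · exact rep_le_aux hπ hnd hwd h heq
    · exact (rep_le_aux hπ hnd hwd' h heq.symm).symm
  subst hcc
  have h0 : π ^ c * (star π) ^ (a - c) ≠ 0 :=
    mul_ne_zero (pow_ne_zero _ hπ.ne_zero) (pow_ne_zero _ (star_ne_zero.mpr hπ.ne_zero))
  have : w = w' := mul_left_cancel₀ h0 heq
  simp [this]


lemma key_ind (n : ℕ) : 0 < n →
    4 ∣ r2 n ∧ ∀ k, k.Prime → r2 n = 4 * k →
      ∃ p, p.Prime ∧ p % 4 = 1 ∧ p ^ (k - 1) ∣ n := by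
  induction n using Nat.strong_induction_on with
  | _ n ih =>
  intro hn
  rcases eq_or_lt_of_le (show 1 ≤ n from hn) with h1 | h1
  · -- n = 1
    have hn1 : n = 1 := h1.symm
    subst hn1
    have hr : r2 1 = 4 := by decide
    refine ⟨by omega, fun k hk h => absurd (by omega : k = 1) hk.ne_one⟩
  · -- 2 ≤ n
    have hq : n.minFac.Prime := Nat.minFac_prime (by omega)
    have hqd : n.minFac ∣ n := n.minFac_dvd
    obtain ⟨q, hqdef⟩ : ∃ q, n.minFac = q := ⟨_, rfl⟩
    rw [hqdef] at hq hqd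
    by_cases h2 : q = 2
    · obtain ⟨t, rfl⟩ := hqd
      rw [h2] at *
      have hr : r2 (2 * t) = r2 t := by
        rw [r2_eq_card, r2_eq_card, card_gset_two_mul]
      have hih := ih t (by omega) (by omega)
      refine ⟨hr ▸ hih.1, fun k hk hrk => ?_⟩
      obtain ⟨p, hp, hp4, hpd⟩ := hih.2 k hk (hr ▸ hrk)
      exact ⟨p, hp, hp4, hpd.trans (dvd_mul_left t 2)⟩
    · by_cases h3 : q % 4 = 3
      · by_cases h4 : q ^ 2 ∣ n
        · obtain ⟨t, rfl⟩ := h4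
          have hq2 : 9 ≤ q ^ 2 := by nlinarith [hq.two_le, (by omega : q ≠ 2), (by omega : 3 ≤ q)]
          have ht : 0 < t := by
            rcases Nat.eq_zero_or_pos t with h | h
            · subst h; simp at hn
            · exact h
          have hr : r2 (q ^ 2 * t) = r2 t := by
            rw [r2_eq_card, r2_eq_card, card_gset_qsq_mul hq h3]
          have hih := ih t (by nlinarith) ht
          refine ⟨hr ▸ hih.1, fun k hk hrk => ?_⟩
          obtain ⟨p, hp, hp4, hpd⟩ := hih.2 k hk (hr ▸ hrk)
          exact ⟨p, hp, hp4, hpd.trans (dvd_mul_left t (q ^ 2))⟩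
        · obtain ⟨s, rfl⟩ := hqd
          have hqs : ¬ q ∣ s := fun ⟨u, hu⟩ => h4 ⟨u, by rw [hu]; ring⟩
          have hr : r2 (q * s) = 0 := by
            rw [r2_eq_card, gset_q_not_sq hq h3 hqs, Finset.card_empty]
          exact ⟨hr ▸ dvd_zero 4, fun k hk hrk => absurd (by omega : k = 0)
            (by exact fun h => hk.ne_zero h)⟩
      · have hodd : q % 2 = 1 := Nat.odd_iff.mp (hq.odd_of_ne_two h2)
        have h4 : q % 4 = 1 := by omega
        have hn0 : n ≠ 0 := by omega
        have ha : 0 < n.factorization q := hq.factorization_pos_of_dvd hn0 hqd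
        set a := n.factorization q with hadef
        have hdecomp : q ^ a * (n / q ^ a) = n := Nat.ordProj_mul_ordCompl_eq_self n q
        set t := n / q ^ a with htdef
        have htq : ¬ q ∣ t := Nat.not_dvd_ordCompl hq hn0
        have hr : r2 n = (a + 1) * r2 t := by
          conv_lhs => rw [← hdecomp]
          rw [r2_eq_card, r2_eq_card, card_gset_p1 hq h4 htq a]
        have hqa : 2 ≤ q ^ a := by
          calc 2 ≤ q := hq.two_le
          _ = q ^ 1 := (pow_one q).symm
          _ ≤ q ^ a := Nat.pow_le_pow_right (by omega) (by omega)
        have htpos : 0 < t := by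
          rcases Nat.eq_zero_or_pos t with h | h
          · rw [h, mul_zero] at hdecomp; omega
          · exact h
        have htlt : t < n := by nlinarith [hdecomp]
        obtain ⟨s, hs⟩ := (ih t htlt htpos).1
        constructor
        · exact ⟨(a + 1) * s, by rw [hr, hs]; ring⟩
        · intro k hk hrk
          rw [hr, hs] at hrk
          have h44 : 4 * ((a + 1) * s) = 4 * k := by rw [← hrk]; ring
          have hks : k = (a + 1) * s := (Nat.eq_of_mul_eq_mul_left (by norm_num) h44).symm
          rcases hk.eq_one_or_self_of_dvd (a + 1) ⟨s, hks⟩ with h | h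
          · omega
          · refine ⟨q, hq, h4, ?_⟩
            have : k - 1 = a := by omega
            rw [this]
            exact hdecomp ▸ Dvd.intro t rfl

lemma r2_pow_five (m : ℕ) : r2 (5 ^ m) = 4 * (m + 1) := by
  have h := card_gset_p1 (p := 5) (by norm_num) (by norm_num) (t := 1) (by norm_num) m
  have h1 : r2 1 = 4 := by decide
  have h2 : r2 (5 ^ m * 1) = (m + 1) * r2 1 := by
    rw [r2_eq_card, r2_eq_card, h]
  rw [mul_one, h1] at h2
  rw [h2]; ring

theorem nk_prime (k : ℕ) (hk : k.Prime) :
    r2 (5 ^ (k - 1)) = 4 * k ∧ nk k = 5 ^ (k - 1) := by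
  have hk1 : 1 ≤ k := hk.one_lt.le.trans' (by omega)
  have h5 : r2 (5 ^ (k - 1)) = 4 * k := by
    rw [r2_pow_five]
    congr 1
    omega
  refine ⟨h5, ?_⟩
  have hmem : (5 ^ (k - 1)) ∈ {n : ℕ | 0 < n ∧ r2 n = 4 * k} :=
    ⟨pow_pos (by norm_num) _, h5⟩
  apply Nat.le_antisymm
  · exact Nat.sInf_le hmem
  · apply le_csInf ⟨_, hmem⟩
    rintro n ⟨hn, hrn⟩
    obtain ⟨p, hp, hp4, hpd⟩ := (key_ind n hn).2 k hk hrn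
    have hp5 : 5 ≤ p := by have := hp.two_le; omega
    calc 5 ^ (k - 1) ≤ p ^ (k - 1) := Nat.pow_le_pow_left hp5 _
      _ ≤ n := Nat.le_of_dvd hn hpd
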